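/- For any literals L and L', the weight constraint program { L ← not L' , L' ← not L , ⊥ ← L, L' } and the program consisting of the single weight constraint 1 ≤ {L = 1, L' = 1} ≤ 1 have exactly the same SE-models, and hence are strongly equivalent. -/

import Mathlib

open scoped Classical

inductive Lit where
  | pos : ℕ → Lit
  | neg : ℕ → Lit
deriving DecidableEq

/-- A set of literals is consistent if it contains no complementary pair. -/
def Consistent (X : Set Lit) : Prop :=
  ∀ a : ℕ, ¬ (Lit.pos a ∈ X ∧ Lit.neg a ∈ X)

/-- A rule element: a literal or a literal prefixed with `not`. -/
inductive RElem where
  | pos : Lit → RElem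
  | neg : Lit → RElem
deriving DecidableEq

def SatRE (X : Set Lit) : RElem → Prop
  | RElem.pos l => l ∈ X
  | RElem.neg l => l ∉ X

/-- The literal of a rule element. -/
def reLit : RElem → Lit
  | RElem.pos l => l
  | RElem.neg l => l

/-- A weight constraint L ≤ S ≤ U, where S is a (multi)set of weight assignments
e = w (rule element, weight) and L, U are reals or ±∞. -/
structure WC where
  lb : EReal
  S : Multiset (RElem × ℝ)
  ub : EReal

/-- v(S,X): the sum of the weights of the assignments whose rule element X satisfies. -/
noncomputable def wval (X : Set Lit) (S : Multiset (RElem × ℝ)) : ℝ :=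
  ((S.filter fun p => SatRE X p.1).map Prod.snd).sum

def SatWC (X : Set Lit) (C : WC) : Prop :=
  C.lb ≤ (wval X C.S : EReal) ∧ (wval X C.S : EReal) ≤ C.ub

/-- A WCP rule C0 ← C1,...,Cn. -/
structure WRule where
  head : WC
  body : List WC

abbrev WProg := Set WRule

def isPosRE (p : RElem × ℝ) : Prop := ∃ l : Lit, p.1 = RElem.pos l

/-- In a weight constraint program, heads contain no negative rule elements. -/
def HeadPos (P : WProg) : Prop := ∀ r ∈ P, ∀ p ∈ r.head.S, isPosRE p

def SatWRule (X : Set Lit) (r : WRule) : Prop :=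
  (∀ C ∈ r.body, SatWC X C) → SatWC X r.head

def SatWProg (X : Set Lit) (P : WProg) : Prop := ∀ r ∈ P, SatWRule X r

/-- The reduct (L ≤ S)^X = L − v(S∖S', X) ≤ S', where S' is the positive part of S. -/
noncomputable def RedLS (X : Set Lit) (C : WC) : WC :=
  ⟨C.lb - (wval X (C.S.filter fun p => ¬ isPosRE p) : EReal),
    C.S.filter isPosRE, ⊤⟩

/-- The weight constraint 1 ≤ {l = 1}, representing the literal l. -/
noncomputable def litWC (l : Lit) : WC := ⟨(1 : EReal), {(RElem.pos l, (1 : ℝ))}, ⊤⟩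

/-- The weight constraint 1 ≤ {not l = 1}, representing `not l`. -/
noncomputable def notWC (l : Lit) : WC := ⟨(1 : EReal), {(RElem.neg l, (1 : ℝ))}, ⊤⟩

/-- ⊥, i.e. the weight constraint 1 ≤ {}. -/
noncomputable def botWC : WC := ⟨(1 : EReal), 0, ⊤⟩

/-- The reduct of a WCP rule with respect to X: all rules e ← (L1 ≤ S1)^X,...,(Ln ≤ Sn)^X
for head literals e with X ⊨ e and X ⊨ Si ≤ Ui for all i. -/
noncomputable def WReductRule (X : Set Lit) (r : WRule) : WProg :=
  {r' | ∃ l : Lit, (∃ w : ℝ, (RElem.pos l, w) ∈ r.head.S) ∧ l ∈ X ∧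
    (∀ C ∈ r.body, (wval X C.S : EReal) ≤ C.ub) ∧
    r' = ⟨litWC l, r.body.map (RedLS X)⟩}

noncomputable def WReductProg (X : Set Lit) (P : WProg) : WProg :=
  {r' | ∃ r ∈ P, r' ∈ WReductRule X r}

/-- X is an answer set for P if X ⊨ P and no proper subset of X satisfies P^X. -/
def AnswerSetW (X : Set Lit) (P : WProg) : Prop :=
  Consistent X ∧ SatWProg X P ∧
    ∀ Z : Set Lit, Z ⊂ X → ¬ SatWProg Z (WReductProg X P)

def SEModelW (P : WProg) (X Y : Set Lit) : Prop :=
  Consistent X ∧ Consistent Y ∧ X ⊆ Y ∧ SatWProg Y P ∧ SatWProg X (WReductProg Y P)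

def StrongEqW (P Q : WProg) : Prop :=
  ∀ R : WProg, HeadPos R →
    ∀ Y : Set Lit, AnswerSetW Y (P ∪ R) ↔ AnswerSetW Y (Q ∪ R)

/-- A weight constraint program is ¬-free if classical negation occurs nowhere in it. -/
def WProgNegFree (P : WProg) : Prop :=
  ∀ r ∈ P, (∀ p ∈ r.head.S, ∃ a : ℕ, reLit p.1 = Lit.pos a) ∧
    ∀ C ∈ r.body, ∀ p ∈ C.S, ∃ a : ℕ, reLit p.1 = Lit.pos a

def AtomsOnly (Z : Set Lit) : Prop := ∀ l ∈ Z, ∃ a, l = Lit.pos a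
@[simp] lemma satRE_pos (X : Set Lit) (l : Lit) : SatRE X (RElem.pos l) = (l ∈ X) := rfl
@[simp] lemma satRE_neg (X : Set Lit) (l : Lit) : SatRE X (RElem.neg l) = (l ∉ X) := rfl

@[simp] lemma isPosRE_pos (l : Lit) (w : ℝ) : isPosRE (RElem.pos l, w) := ⟨l, rfl⟩
@[simp] lemma not_isPosRE_neg (l : Lit) (w : ℝ) : ¬ isPosRE (RElem.neg l, w) := by
  rintro ⟨l', h⟩; cases h

lemma wval_zero (X : Set Lit) : wval X 0 = 0 := by simp [wval]

lemma wval_singleton (X : Set Lit) (e : RElem) (w : ℝ) :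
    wval X {(e, w)} = if SatRE X e then w else 0 := by
  classical
  rw [wval, Multiset.filter_singleton]
  split <;> simp

lemma wval_pair (X : Set Lit) (e f : RElem) (w v : ℝ) :
    wval X {(e, w), (f, v)} =
      (if SatRE X e then w else 0) + (if SatRE X f then v else 0) := by
  classical
  show wval X ((e, w) ::ₘ {(f, v)}) = _
  rw [wval, Multiset.filter_cons]
  split <;> simp [Multiset.filter_singleton] <;> split <;> simp

lemma one_le_coe (r : ℝ) : ((1:EReal) ≤ (r:EReal)) ↔ 1 ≤ r := by
  rw [← EReal.coe_one, EReal.coe_le_coe_iff]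

lemma coe_le_one (r : ℝ) : ((r:EReal) ≤ (1:EReal)) ↔ r ≤ 1 := by
  rw [← EReal.coe_one, EReal.coe_le_coe_iff]

lemma satWC_litWC (X : Set Lit) (l : Lit) : SatWC X (litWC l) ↔ l ∈ X := by
  rw [SatWC, litWC]
  simp only [wval_singleton, satRE_pos, le_top, and_true, one_le_coe]
  by_cases h : l ∈ X <;> simp_all

lemma satWC_notWC (X : Set Lit) (l : Lit) : SatWC X (notWC l) ↔ l ∉ X := by
  rw [SatWC, notWC]
  simp only [wval_singleton, satRE_neg, le_top, and_true, one_le_coe]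
  by_cases h : l ∈ X <;> simp_all

lemma not_satWC_botWC (X : Set Lit) : ¬ SatWC X botWC := by
  rw [SatWC, botWC]
  simp only [wval_zero, le_top, and_true, one_le_coe]
  norm_num

lemma satWC_redls_notWC (X Y : Set Lit) (l : Lit) :
    SatWC X (RedLS Y (notWC l)) ↔ l ∉ Y := by
  classical
  simp only [SatWC, RedLS, notWC, Multiset.filter_singleton, not_isPosRE_neg,
    not_false_eq_true, if_true, if_false, wval_zero, wval_singleton, satRE_neg,
    le_top, and_true, EReal.coe_zero]
  by_cases hl : l ∈ Y
  · simp only [hl, not_true_eq_false, if_false, EReal.coe_zero, iff_false, not_le]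
    rw [Multiset.empty_eq_zero, wval_zero]
    norm_num
  · simp only [hl, not_false_eq_true, if_true, iff_true]
    rw [show ((1:ℝ):EReal) = (1:EReal) from rfl]
    rw [show (1:EReal) - (1:EReal) = ((0:ℝ):EReal) by
      rw [show (1:EReal) = ((1:ℝ):EReal) from rfl, ← EReal.coe_sub]; norm_num]
    rw [Multiset.empty_eq_zero, wval_zero]

lemma satWProg_reduct_iff (X Y : Set Lit) (P : WProg) :
    SatWProg X (WReductProg Y P) ↔
    ∀ r ∈ P, ∀ l : Lit, (∃ w : ℝ, (RElem.pos l, w) ∈ r.head.S) → l ∈ Y →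
      (∀ C ∈ r.body, (wval Y C.S : EReal) ≤ C.ub) →
      SatWRule X ⟨litWC l, r.body.map (RedLS Y)⟩ := by
  constructor
  · intro h r hr l hw hlY hub
    exact h _ ⟨r, hr, l, hw, hlY, hub, rfl⟩
  · rintro h r' ⟨r, hr, l, hw, hlY, hub, rfl⟩
    exact h r hr l hw hlY hub

lemma sat_reduct_self (Y : Set Lit) (P : WProg) : SatWProg Y (WReductProg Y P) := by
  rintro r' ⟨r, hr, l, hw, hlY, hub, rfl⟩ _
  exact (satWC_litWC Y l).2 hlY

lemma satWProg_union (X : Set Lit) (P Q : WProg) :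
    SatWProg X (P ∪ Q) ↔ SatWProg X P ∧ SatWProg X Q := by
  simp [SatWProg, Set.mem_union, or_imp, forall_and]

lemma reduct_union (Y : Set Lit) (P Q : WProg) :
    WReductProg Y (P ∪ Q) = WReductProg Y P ∪ WReductProg Y Q := by
  ext r'
  simp only [WReductProg, Set.mem_setOf_eq, Set.mem_union]
  constructor
  · rintro ⟨r, hr | hr, h⟩
    exacts [Or.inl ⟨r, hr, h⟩, Or.inr ⟨r, hr, h⟩]
  · rintro (⟨r, hr, h⟩ | ⟨r, hr, h⟩)
    exacts [⟨r, Or.inl hr, h⟩, ⟨r, Or.inr hr, h⟩]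

lemma consistent_subset {X Y : Set Lit} (h : X ⊆ Y) (hY : Consistent Y) : Consistent X :=
  fun a ⟨h1, h2⟩ => hY a ⟨h h1, h h2⟩

lemma answer_mono {P Q : WProg} (h : ∀ X Y : Set Lit, SEModelW P X Y ↔ SEModelW Q X Y)
    (R : WProg) (Y : Set Lit) (hA : AnswerSetW Y (P ∪ R)) : AnswerSetW Y (Q ∪ R) := by
  obtain ⟨hcY, hsat, hmin⟩ := hA
  rw [satWProg_union] at hsat
  obtain ⟨hsP, hsR⟩ := hsat
  have hQ : SatWProg Y Q :=
    ((h Y Y).1 ⟨hcY, hcY, subset_rfl, hsP, sat_reduct_self Y P⟩).2.2.2.1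
  refine ⟨hcY, (satWProg_union _ _ _).2 ⟨hQ, hsR⟩, ?_⟩
  intro Z hZ hsatZ
  rw [reduct_union, satWProg_union] at hsatZ
  obtain ⟨hzQ, hzR⟩ := hsatZ
  have hcZ : Consistent Z := consistent_subset hZ.subset hcY
  have hzP : SatWProg Z (WReductProg Y P) :=
    ((h Z Y).2 ⟨hcZ, hcY, hZ.subset, hQ, hzQ⟩).2.2.2.2
  exact hmin Z hZ (by rw [reduct_union, satWProg_union]; exact ⟨hzP, hzR⟩)

lemma se_to_strong {P Q : WProg} (h : ∀ X Y : Set Lit, SEModelW P X Y ↔ SEModelW Q X Y) :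
    StrongEqW P Q := fun R _ Y =>
  ⟨answer_mono h R Y, answer_mono (fun X Y => (h X Y).symm) R Y⟩

lemma satP1_iff (L L' : Lit) (Y : Set Lit) :
    SatWProg Y ({⟨litWC L, [notWC L']⟩, ⟨litWC L', [notWC L]⟩,
                 ⟨botWC, [litWC L, litWC L']⟩} : WProg) ↔
      ((L ∈ Y ∧ L' ∉ Y) ∨ (L' ∈ Y ∧ L ∉ Y)) := by
  simp only [SatWProg, Set.mem_insert_iff, Set.mem_singleton_iff, forall_eq_or_imp,
    forall_eq, SatWRule, List.mem_singleton, List.mem_cons, List.not_mem_nil, or_false,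
    satWC_litWC, satWC_notWC, not_satWC_botWC]
  tauto

lemma satP2_iff (L L' : Lit) (Y : Set Lit) :
    SatWProg Y ({⟨⟨(1 : EReal), {(RElem.pos L, (1 : ℝ)), (RElem.pos L', (1 : ℝ))},
                  (1 : EReal)⟩, []⟩} : WProg) ↔
      ((L ∈ Y ∧ L' ∉ Y) ∨ (L' ∈ Y ∧ L ∉ Y)) := by
  simp only [SatWProg, Set.mem_singleton_iff, forall_eq, SatWRule, List.not_mem_nil,
    false_implies, implies_true, true_implies, SatWC, wval_pair, satRE_pos,
    one_le_coe, coe_le_one]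
  by_cases h1 : L ∈ Y <;> by_cases h2 : L' ∈ Y <;> simp [h1, h2]

lemma redP1_iff (L L' : Lit) (X Y : Set Lit) :
    SatWProg X (WReductProg Y ({⟨litWC L, [notWC L']⟩, ⟨litWC L', [notWC L]⟩,
                 ⟨botWC, [litWC L, litWC L']⟩} : WProg)) ↔
      ((L ∈ Y → L' ∉ Y → L ∈ X) ∧ (L' ∈ Y → L ∉ Y → L' ∈ X)) := by
  rw [satWProg_reduct_iff]
  simp only [Set.mem_insert_iff, Set.mem_singleton_iff, forall_eq_or_imp, forall_eq,
    litWC, botWC, Multiset.mem_singleton, Multiset.notMem_zero, Prod.mk.injEq,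
    RElem.pos.injEq, exists_eq_right_right, exists_eq_right, false_implies, implies_true,
    and_true, true_and, List.mem_singleton, List.mem_cons, List.not_mem_nil, or_false,
    le_top, SatWRule, List.map_cons, List.map_nil, satWC_redls_notWC, exists_false,
    forall_eq']
  simp only [show (notWC L').ub = ⊤ from rfl, show (notWC L).ub = ⊤ from rfl, le_top,
    true_implies,
    show ({ lb := 1, S := {(RElem.pos L, 1)}, ub := ⊤ } : WC) = litWC L from rfl,
    show ({ lb := 1, S := {(RElem.pos L', 1)}, ub := ⊤ } : WC) = litWC L' from rfl,
    satWC_litWC]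

lemma redP2_iff (L L' : Lit) (X Y : Set Lit) :
    SatWProg X (WReductProg Y ({⟨⟨(1 : EReal), {(RElem.pos L, (1 : ℝ)),
        (RElem.pos L', (1 : ℝ))}, (1 : EReal)⟩, []⟩} : WProg)) ↔
      ((L ∈ Y → L ∈ X) ∧ (L' ∈ Y → L' ∈ X)) := by
  rw [satWProg_reduct_iff]
  simp only [Set.mem_singleton_iff, forall_eq, Multiset.insert_eq_cons, Multiset.mem_cons,
    Multiset.mem_singleton, Prod.mk.injEq, RElem.pos.injEq, List.not_mem_nil,
    false_implies, implies_true, true_implies, SatWRule, List.map_nil, satWC_litWC]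
  constructor
  · intro h
    exact ⟨fun hL => h L ⟨1, Or.inl ⟨rfl, rfl⟩⟩ hL, fun hL' => h L' ⟨1, Or.inr ⟨rfl, rfl⟩⟩ hL'⟩
  · rintro ⟨h1, h2⟩ l ⟨w, ⟨rfl, -⟩ | ⟨rfl, -⟩⟩ hl
    exacts [h1 hl, h2 hl]

theorem stmt15' (L L' : Lit) :
    (∀ X Y : Set Lit,
        SEModelW ({⟨litWC L, [notWC L']⟩, ⟨litWC L', [notWC L]⟩,
                   ⟨botWC, [litWC L, litWC L']⟩} : WProg) X Y ↔
        SEModelW ({⟨⟨(1 : EReal), {(RElem.pos L, (1 : ℝ)), (RElem.pos L', (1 : ℝ))},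
                     (1 : EReal)⟩, []⟩} : WProg) X Y) ∧
    StrongEqW ({⟨litWC L, [notWC L']⟩, ⟨litWC L', [notWC L]⟩,
                ⟨botWC, [litWC L, litWC L']⟩} : WProg)
      ({⟨⟨(1 : EReal), {(RElem.pos L, (1 : ℝ)), (RElem.pos L', (1 : ℝ))},
          (1 : EReal)⟩, []⟩} : WProg) := by
  have hse : ∀ X Y : Set Lit,
      SEModelW ({⟨litWC L, [notWC L']⟩, ⟨litWC L', [notWC L]⟩,
                 ⟨botWC, [litWC L, litWC L']⟩} : WProg) X Y ↔
      SEModelW ({⟨⟨(1 : EReal), {(RElem.pos L, (1 : ℝ)), (RElem.pos L', (1 : ℝ))},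
                   (1 : EReal)⟩, []⟩} : WProg) X Y := by
    intro X Y
    rw [SEModelW, SEModelW, satP1_iff, satP2_iff, redP1_iff, redP2_iff]
    constructor
    · rintro ⟨a, b, c, d, e⟩
      exact ⟨a, b, c, d, by tauto⟩
    · rintro ⟨a, b, c, d, e⟩
      exact ⟨a, b, c, d, by tauto⟩
  exact ⟨hse, se_to_strong hse⟩


/-- { L ← not L' , L' ← not L , ⊥ ← L, L' } and { 1 ≤ {L=1, L'=1} ≤ 1 }
have the same SE-models, hence are strongly equivalent. -/
theorem stmt15 (L L' : Lit) :
    (∀ X Y : Set Lit,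
        SEModelW ({⟨litWC L, [notWC L']⟩, ⟨litWC L', [notWC L]⟩,
                   ⟨botWC, [litWC L, litWC L']⟩} : WProg) X Y ↔
        SEModelW ({⟨⟨(1 : EReal), {(RElem.pos L, (1 : ℝ)), (RElem.pos L', (1 : ℝ))},
                     (1 : EReal)⟩, []⟩} : WProg) X Y) ∧
    StrongEqW ({⟨litWC L, [notWC L']⟩, ⟨litWC L', [notWC L]⟩,
                ⟨botWC, [litWC L, litWC L']⟩} : WProg)
      ({⟨⟨(1 : EReal), {(RElem.pos L, (1 : ℝ)), (RElem.pos L', (1 : ℝ))},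
          (1 : EReal)⟩, []⟩} : WProg) := by
  exact stmt15' L L'
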